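/- Let 1/2 < H < 1, let c_H := (H − 1/2) ( 2H Γ(3/2 − H) / ( Γ(H + 1/2) Γ(2 − 2H) ) )^{1/2}, write ∂_1 K_H(t,u) := c_H u^{1/2−H} (t−u)^{H−3/2} t^{H−1/2}, and set A_r := ∫_0^r e^{v/H} dv = H(e^{r/H} − 1) for r ≥ 0. Then for all real numbers 0 < s < t, ∫_0^s ∂_1 K_H(A_t, A_u) ∂_1 K_H(A_s, A_u) e^{u/H} du = H(2H−1) (A_t − A_s)^{2H−2}. -/

import Mathlib

open MeasureTheory Real

/-- The constant `c_H` of the Volterra kernel of fractional Brownian motion. -/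
noncomputable def cH (H : ℝ) : ℝ :=
  (H - 1 / 2) * (2 * H * Gamma (3 / 2 - H) / (Gamma (H + 1 / 2) * Gamma (2 - 2 * H))) ^ ((1:ℝ) / 2)

/-- The `t`-partial derivative `∂₁K_H(t,u) = c_H u^{1/2−H} (t−u)^{H−3/2} t^{H−1/2}`
of the Volterra kernel of fractional Brownian motion. -/
noncomputable def dK (H t u : ℝ) : ℝ :=
  cH H * u ^ (1 / 2 - H) * (t - u) ^ (H - 3 / 2) * t ^ (H - 1 / 2)

section Aux
open Set

lemma exp_rpow' (x y : ℝ) : (exp x) ^ y = exp (x * y) := by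
  rw [rpow_def_of_pos (exp_pos x), log_exp]

lemma key_alg (H a b ab w w1 D : ℝ) (ha : 0 < a) (hb : 0 < b) (hab : 0 < ab)
    (hw : 0 < w) (hw1 : 0 < w1) (hD : 0 < D) :
    (a * b * ab / (D * D)) *
      ((a * b * w / D) ^ (1/2 - H) * (a * b * w / D) ^ (1/2 - H) *
        (a * ab / D) ^ (H - 3/2) * (b * ab * w1 / D) ^ (H - 3/2) *
        a ^ (H - 1/2) * b ^ (H - 1/2)) =
    ab ^ (2*H - 2) * w ^ (1 - 2*H) * w1 ^ (H - 3/2) := by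
  obtain ⟨x, rfl⟩ : ∃ x, a = exp x := ⟨log a, (exp_log ha).symm⟩
  obtain ⟨y, rfl⟩ : ∃ y, b = exp y := ⟨log b, (exp_log hb).symm⟩
  obtain ⟨z, rfl⟩ : ∃ z, ab = exp z := ⟨log ab, (exp_log hab).symm⟩
  obtain ⟨u, rfl⟩ : ∃ u, w = exp u := ⟨log w, (exp_log hw).symm⟩
  obtain ⟨v, rfl⟩ : ∃ v, w1 = exp v := ⟨log w1, (exp_log hw1).symm⟩
  obtain ⟨d, rfl⟩ : ∃ d, D = exp d := ⟨log D, (exp_log hD).symm⟩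
  simp only [← exp_add, ← exp_sub, exp_rpow']
  rw [exp_eq_exp]
  ring

lemma real_beta {p q : ℝ} (hp : 0 < p) (hq : 0 < q) :
    ∫ x in (0:ℝ)..1, x ^ (p - 1) * (1 - x) ^ (q - 1) = Gamma p * Gamma q / Gamma (p + q) := by
  have hB : Complex.betaIntegral p q =
      ((∫ x in (0:ℝ)..1, x ^ (p - 1) * (1 - x) ^ (q - 1) : ℝ) : ℂ) := by
    rw [Complex.betaIntegral, ← intervalIntegral.integral_ofReal]
    refine intervalIntegral.integral_congr (fun x hx => ?_)
    rw [Set.uIcc_of_le (by norm_num : (0:ℝ) ≤ 1)] at hx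
    push_cast
    rw [Complex.ofReal_cpow hx.1, Complex.ofReal_cpow (by linarith [hx.2] : (0:ℝ) ≤ 1 - x)]
    push_cast
    ring
  have h := Complex.Gamma_mul_Gamma_eq_betaIntegral
    (by simpa using hp : 0 < (p:ℂ).re) (by simpa using hq : 0 < (q:ℂ).re)
  rw [hB] at h
  have hne : Gamma (p + q) ≠ 0 := (Gamma_pos_of_pos (by linarith)).ne'
  have : ((Gamma p * Gamma q : ℝ) : ℂ) = ((Gamma (p+q) * ∫ x in (0:ℝ)..1, x ^ (p - 1) * (1 - x) ^ (q - 1) : ℝ) : ℂ) := by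
    rw [Complex.ofReal_mul, Complex.ofReal_mul, ← Complex.Gamma_ofReal, ← Complex.Gamma_ofReal,
      ← Complex.Gamma_ofReal, Complex.ofReal_add]
    exact h
  have h2 := Complex.ofReal_inj.mp this
  field_simp
  linarith [h2]

lemma cH_sq_mul (H : ℝ) (hH1 : 1 / 2 < H) (hH2 : H < 1) :
    cH H * cH H * (Gamma (2 - 2*H) * Gamma (H - 1/2) / Gamma (3/2 - H)) = H * (2*H - 1) := by
  have hg1 : 0 < Gamma (3/2 - H) := Gamma_pos_of_pos (by linarith)
  have hg2 : 0 < Gamma (2 - 2*H) := Gamma_pos_of_pos (by linarith)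
  have hg3 : 0 < Gamma (H - 1/2) := Gamma_pos_of_pos (by linarith)
  have hX : (0:ℝ) < 2 * H * Gamma (3 / 2 - H) / (Gamma (H + 1 / 2) * Gamma (2 - 2 * H)) := by
    have hg4 : 0 < Gamma (H + 1/2) := Gamma_pos_of_pos (by linarith)
    positivity
  have hGadd : Gamma (H + 1/2) = (H - 1/2) * Gamma (H - 1/2) := by
    rw [show H + 1/2 = (H - 1/2) + 1 by ring, Gamma_add_one (by linarith : H - (1:ℝ)/2 ≠ 0)]
  have hsq : (2 * H * Gamma (3 / 2 - H) / (Gamma (H + 1 / 2) * Gamma (2 - 2 * H))) ^ ((1:ℝ)/2) *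
      (2 * H * Gamma (3 / 2 - H) / (Gamma (H + 1 / 2) * Gamma (2 - 2 * H))) ^ ((1:ℝ)/2) =
      2 * H * Gamma (3 / 2 - H) / (Gamma (H + 1 / 2) * Gamma (2 - 2 * H)) := by
    rw [← rpow_add hX]; norm_num
  rw [cH, show ∀ x y : ℝ, (H - 1/2) * x * ((H - 1/2) * y) = (H-1/2)*(H-1/2)*(x*y) by intros; ring,
    hsq, hGadd]
  have h12 : H - 1/2 ≠ 0 := by linarith
  have hNe : ((H - 1/2) * Gamma (H - 1/2) * Gamma (2 - 2*H)) * Gamma (3/2 - H) ≠ 0 :=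
    mul_ne_zero (mul_ne_zero (mul_ne_zero h12 hg3.ne') hg2.ne') hg1.ne'
  have key2 : (2 * H * Gamma (3/2 - H) / ((H - 1/2) * Gamma (H - 1/2) * Gamma (2 - 2*H))) *
      (Gamma (2 - 2*H) * Gamma (H - 1/2) / Gamma (3/2 - H)) = 2 * H / (H - 1/2) := by
    rw [div_mul_div_comm, div_eq_div_iff (by
      exact mul_ne_zero (mul_ne_zero (mul_ne_zero h12 hg3.ne') hg2.ne') hg1.ne') h12]
    ring
  rw [mul_assoc, key2]
  rw [show (H - 1/2) * (H - 1/2) * (2 * H / (H - 1/2)) =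
      ((H - 1/2) * (H - 1/2) * (2 * H)) / (H - 1/2) from by ring, div_eq_iff h12]
  ring

lemma core {H a b : ℝ} (hH1 : 1/2 < H) (hH2 : H < 1) (hb : 0 < b) (hba : b < a) :
    ∫ v in Ioo (0:ℝ) b, dK H a v * dK H b v = H * (2*H - 1) * (a - b) ^ (2*H - 2) := by
  have ha : 0 < a := hb.trans hba
  have hab : 0 < a - b := by linarith
  set φ : ℝ → ℝ := fun w => a * b * w / (a - b + b * w) with hφ
  have hDpos : ∀ w : ℝ, 0 < w → 0 < a - b + b * w := fun w hw => by nlinarith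
  have hderiv : ∀ w ∈ Ioo (0:ℝ) 1,
      HasDerivWithinAt φ (a * b * (a-b) / ((a - b + b * w) * (a - b + b * w))) (Ioo 0 1) w := by
    intro w hw
    have hD := hDpos w hw.1
    have h1 : HasDerivAt (fun w : ℝ => a * b * w) (a * b) w := by
      simpa using (hasDerivAt_id w).const_mul (a * b)
    have h2 : HasDerivAt (fun w : ℝ => a - b + b * w) b w := by
      simpa using ((hasDerivAt_id w).const_mul b).const_add (a - b)
    have := (h1.div h2 hD.ne')
    rw [show a * b * (a-b) / ((a - b + b * w) * (a - b + b * w)) =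
        (a * b * (a - b + b * w) - a * b * w * b) / (a - b + b * w) ^ 2 by
      rw [div_eq_div_iff (mul_pos hD hD).ne' (pow_pos hD 2).ne']
      ring]
    exact this.hasDerivWithinAt
  have hinj : InjOn φ (Ioo 0 1) := by
    intro x hx y hy h
    have hDx := hDpos x hx.1
    have hDy := hDpos y hy.1
    rw [hφ] at h
    simp only [div_eq_div_iff hDx.ne' hDy.ne'] at h
    have : a * b * (a - b) * x = a * b * (a - b) * y := by linear_combination h
    exact mul_left_cancel₀ (by positivity) this
  have himg : φ '' Ioo 0 1 = Ioo 0 b := by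
    ext v
    constructor
    · rintro ⟨w, hw, rfl⟩
      have hD := hDpos w hw.1
      constructor
      · exact div_pos (mul_pos (mul_pos ha hb) hw.1) hD
      · rw [div_lt_iff₀ hD]; nlinarith [mul_pos (mul_pos hb hab) (sub_pos.mpr hw.2)]
    · intro hv
      have hav : 0 < a - v := by nlinarith [hv.2]
      refine ⟨v * (a - b) / (b * (a - v)), ⟨div_pos (mul_pos hv.1 hab) (mul_pos hb hav), ?_⟩, ?_⟩
      · rw [div_lt_one (mul_pos hb hav)]; nlinarith [mul_pos ha (sub_pos.mpr hv.2)]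
      · show a * b * (v * (a - b) / (b * (a - v))) / (a - b + b * (v * (a - b) / (b * (a - v)))) = v
        rw [div_eq_iff]
        · field_simp
          ring
        · have hpos : 0 < a - b + b * (v * (a - b) / (b * (a - v))) := by
            have h1 : 0 < b * (v * (a - b) / (b * (a - v))) :=
              mul_pos hb (div_pos (mul_pos hv.1 hab) (mul_pos hb hav))
            linarith
          exact hpos.ne'
  have hchg := integral_image_eq_integral_abs_deriv_smul measurableSet_Ioo hderiv hinj
    (fun v => dK H a v * dK H b v)
  rw [himg] at hchg
  rw [hchg]
  have hpt : ∀ w ∈ Ioo (0:ℝ) 1,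
      |a * b * (a-b) / ((a - b + b * w) * (a - b + b * w))| • (dK H a (φ w) * dK H b (φ w)) =
      (cH H * cH H * (a - b) ^ (2*H-2)) * (w ^ (1 - 2*H) * (1 - w) ^ (H - 3/2)) := by
    intro w hw
    have hw1 : 0 < 1 - w := by linarith [hw.2]
    have hD := hDpos w hw.1
    have habs : |a * b * (a-b) / ((a - b + b * w) * (a - b + b * w))| =
        a * b * (a-b) / ((a - b + b * w) * (a - b + b * w)) := abs_of_pos (by positivity)
    have e1 : a - φ w = a * (a - b) / (a - b + b * w) := by
      rw [hφ]; field_simp; ring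
    have e2 : b - φ w = b * (a - b) * (1 - w) / (a - b + b * w) := by
      rw [hφ]; field_simp; ring
    rw [smul_eq_mul, habs, dK, dK, e1, e2]
    have := key_alg H a b (a - b) w (1 - w) (a - b + b * w) ha hb hab hw.1 hw1 hD
    calc a * b * (a-b) / ((a - b + b * w) * (a - b + b * w)) *
          (cH H * (φ w) ^ (1/2 - H) * (a * (a - b) / (a - b + b * w)) ^ (H - 3/2) * a ^ (H - 1/2) *
           (cH H * (φ w) ^ (1/2 - H) * (b * (a - b) * (1 - w) / (a - b + b * w)) ^ (H - 3/2) * b ^ (H - 1/2)))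
        = (cH H * cH H) * ((a * b * (a-b) / ((a - b + b * w) * (a - b + b * w))) *
          ((a * b * w / (a - b + b * w)) ^ (1/2 - H) * (a * b * w / (a - b + b * w)) ^ (1/2 - H) *
            (a * (a - b) / (a - b + b * w)) ^ (H - 3/2) *
            (b * (a - b) * (1 - w) / (a - b + b * w)) ^ (H - 3/2) *
            a ^ (H - 1/2) * b ^ (H - 1/2))) := by rw [hφ]; ring
      _ = (cH H * cH H) * ((a-b) ^ (2*H-2) * w ^ (1 - 2*H) * (1-w) ^ (H - 3/2)) := by rw [this]
      _ = (cH H * cH H * (a - b) ^ (2*H-2)) * (w ^ (1 - 2*H) * (1 - w) ^ (H - 3/2)) := by ring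
  rw [setIntegral_congr_fun measurableSet_Ioo hpt]
  rw [integral_const_mul]
  have hbeta : ∫ w in Ioo (0:ℝ) 1, w ^ (1 - 2*H) * (1 - w) ^ (H - 3/2) =
      Gamma (2 - 2*H) * Gamma (H - 1/2) / Gamma (3/2 - H) := by
    rw [← integral_Ioc_eq_integral_Ioo,
      ← intervalIntegral.integral_of_le (zero_le_one)]
    have := real_beta (p := 2 - 2*H) (q := H - 1/2) (by linarith) (by linarith)
    rw [show (2 - 2*H) + (H - 1/2) = 3/2 - H by ring] at this
    rw [show (1:ℝ) - 2*H = (2 - 2*H) - 1 by ring, show H - 3/2 = (H - 1/2) - 1 by ring]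
    exact this
  rw [hbeta]
  calc cH H * cH H * (a - b) ^ (2*H-2) * (Gamma (2 - 2*H) * Gamma (H - 1/2) / Gamma (3/2 - H))
      = (cH H * cH H * (Gamma (2 - 2*H) * Gamma (H - 1/2) / Gamma (3/2 - H))) * (a-b)^(2*H-2) := by
        ring
    _ = H * (2*H - 1) * (a - b) ^ (2*H - 2) := by rw [cH_sq_mul H hH1 hH2]


/-- With `A_r := ∫_0^r e^{v/H} dv = H(e^{r/H} − 1)`, for `1/2 < H < 1` and `0 < s < t`,
`∫_0^s ∂₁K_H(A_t,A_u) ∂₁K_H(A_s,A_u) e^{u/H} du = H(2H−1)(A_t − A_s)^{2H−2}`. -/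
theorem volterra_kernel_time_changed_integral
    (H : ℝ) (hH1 : 1 / 2 < H) (hH2 : H < 1)
    (A : ℝ → ℝ) (hA : ∀ r : ℝ, A r = H * (exp (r / H) - 1))
    (s t : ℝ) (hs : 0 < s) (hst : s < t) :
    ∫ u in (0:ℝ)..s, dK H (A t) (A u) * dK H (A s) (A u) * exp (u / H) =
      H * (2 * H - 1) * (A t - A s) ^ (2 * H - 2) := by
  have hH0 : 0 < H := by linarith
  have hmono : StrictMono A := by
    intro x y hxy
    rw [hA, hA]
    have h1 := exp_lt_exp.mpr ((div_lt_div_iff_of_pos_right hH0).mpr hxy)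
    nlinarith
  have hA0 : A 0 = 0 := by rw [hA]; simp
  have hAs : 0 < A s := hA0 ▸ hmono hs
  have hAst : A s < A t := hmono hst
  have hderiv : ∀ u ∈ Ioo (0:ℝ) s, HasDerivWithinAt A (exp (u / H)) (Ioo 0 s) u := by
    intro u hu
    have h1 : HasDerivAt (fun r : ℝ => r / H) (1 / H) u := (hasDerivAt_id u).div_const H
    have h2 := h1.exp
    have h3 := (h2.sub_const 1).const_mul H
    have h4 : HasDerivAt A (H * (exp (u / H) * (1 / H))) u := by
      refine HasDerivAt.congr_of_eventuallyEq h3 ?_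
      filter_upwards with r using (hA r).symm ▸ rfl
    have h5 : H * (exp (u / H) * (1 / H)) = exp (u / H) := by field_simp
    exact (h5 ▸ h4).hasDerivWithinAt
  have himg : A '' Ioo 0 s = Ioo 0 (A s) := by
    ext v
    constructor
    · rintro ⟨u, hu, rfl⟩
      exact ⟨hA0 ▸ hmono hu.1, hmono hu.2⟩
    · intro hv
      have hv1 : (1:ℝ) < v / H + 1 := by
        have := div_pos hv.1 hH0; linarith
      refine ⟨H * log (v / H + 1), ⟨mul_pos hH0 (log_pos hv1), ?_⟩, ?_⟩
      · have h4 : v / H < exp (s / H) - 1 := by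
          rw [div_lt_iff₀ hH0]
          have := hv.2
          rw [hA] at this
          nlinarith
        have h5 : log (v / H + 1) < s / H :=
          (log_lt_iff_lt_exp (by linarith)).mpr (by linarith)
        calc H * log (v / H + 1) < H * (s / H) := by
              exact mul_lt_mul_of_pos_left h5 hH0
          _ = s := by field_simp
      · rw [hA, mul_div_cancel_left₀ _ hH0.ne', exp_log (by linarith)]
        field_simp
        ring
  rw [intervalIntegral.integral_of_le hs.le, integral_Ioc_eq_integral_Ioo]
  have hchg := integral_image_eq_integral_abs_deriv_smul measurableSet_Ioo hderiv
    (hmono.injective.injOn) (fun v => dK H (A t) v * dK H (A s) v)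
  rw [himg] at hchg
  calc ∫ u in Ioo (0:ℝ) s, dK H (A t) (A u) * dK H (A s) (A u) * exp (u / H)
      = ∫ u in Ioo (0:ℝ) s, |exp (u / H)| • (dK H (A t) (A u) * dK H (A s) (A u)) := by
        refine setIntegral_congr_fun measurableSet_Ioo (fun u hu => ?_)
        rw [smul_eq_mul, abs_of_pos (exp_pos _)]; ring
    _ = ∫ v in Ioo (0:ℝ) (A s), dK H (A t) v * dK H (A s) v := hchg.symm
    _ = H * (2 * H - 1) * (A t - A s) ^ (2 * H - 2) := core hH1 hH2 hAs hAst

end Aux
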